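/- Let G be a group and H ≤ G a malnormal subgroup of finite index with rank(G) ≤ [G:H]. Let k denote the number of double cosets HgH of H in G satisfying HgH ≠ Hg⁻¹H (this number is even). Then rank(G) ≤ [G:H] − k/2. -/

import Mathlib

open scoped Classical

section Defs

variable {G : Type*} [Group G]

/-- A single Nielsen move on a finite multiset of group elements: replace one
occurrence of `g` by `g⁻¹`, or by `h * g` or `g * h` where `h` is another
occurrence in the multiset. -/
def NielsenMove (S T : Multiset G) : Prop :=
  (∃ g ∈ S, T = g⁻¹ ::ₘ S.erase g) ∨
    (∃ g ∈ S, ∃ h ∈ S.erase g, T = h * g ::ₘ S.erase g ∨ T = g * h ::ₘ S.erase g)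

/-- Nielsen equivalence: one multiset is obtained from the other by a finite
sequence of Nielsen moves. -/
def NielsenEquiv (S T : Multiset G) : Prop :=
  Relation.ReflTransGen NielsenMove S T

/-- The elements of the multiset `S` lie in pairwise distinct left cosets of `H`. -/
def LeftDistinct (H : Subgroup G) (S : Multiset G) : Prop :=
  (S.map fun x => ((x : G) : G ⧸ H)).Nodup

/-- The elements of the multiset `S` lie in pairwise distinct right cosets of `H`
(using that `Hx = Hy ↔ x⁻¹H = y⁻¹H`). -/
def RightDistinct (H : Subgroup G) (S : Multiset G) : Prop :=
  (S.map fun x => ((x⁻¹ : G) : G ⧸ H)).Nodup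

/-- `T` is a left transversal of `H`: it contains exactly one element of each
left coset of `H`. -/
def IsLeftTransversal (H : Subgroup G) (T : Set G) : Prop :=
  ∀ g : G, ∃! t, t ∈ T ∧ ((t : G) : G ⧸ H) = ((g : G) : G ⧸ H)

/-- `T` is a right transversal of `H`: it contains exactly one element of each
right coset of `H` (using that `Hx = Hy ↔ x⁻¹H = y⁻¹H`). -/
def IsRightTransversal (H : Subgroup G) (T : Set G) : Prop :=
  ∀ g : G, ∃! t, t ∈ T ∧ ((t⁻¹ : G) : G ⧸ H) = ((g⁻¹ : G) : G ⧸ H)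

/-- The left coset `aH` as a set. -/
def lcoset (a : G) (H : Subgroup G) : Set G := {x | a⁻¹ * x ∈ H}

/-- The right coset `Ha` as a set. -/
def rcoset (H : Subgroup G) (a : G) : Set G := {x | x * a⁻¹ ∈ H}

/-- The double coset `HgH` as a set. -/
def dcoset (H : Subgroup G) (g : G) : Set G := {x | ∃ h₁ ∈ H, ∃ h₂ ∈ H, x = h₁ * g * h₂}

/-- `S` is left-right clean relative to `H`: `S ∖ H` is nonempty and its elements
lie in pairwise distinct left cosets and pairwise distinct right cosets of `H`. -/
def LeftRightClean (H : Subgroup G) (S : Multiset G) : Prop :=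
  (∃ x ∈ S, x ∉ H) ∧
    LeftDistinct H (S.filter fun x => x ∉ H) ∧
    RightDistinct H (S.filter fun x => x ∉ H)

end Defs

section Lemmas
variable {G : Type*} [Group G] (H : Subgroup G)

lemma mem_dcoset_self (g : G) : g ∈ dcoset H g :=
  ⟨1, H.one_mem, 1, H.one_mem, by group⟩

lemma dcoset_eq_of_mem {g x : G} (hx : x ∈ dcoset H g) : dcoset H x = dcoset H g := by
  obtain ⟨a, ha, b, hb, rfl⟩ := hx
  ext y
  constructor
  · rintro ⟨c, hc, d, hd, rfl⟩
    exact ⟨c * a, H.mul_mem hc ha, b * d, H.mul_mem hb hd, by group⟩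
  · rintro ⟨c, hc, d, hd, rfl⟩
    exact ⟨c * a⁻¹, H.mul_mem hc (H.inv_mem ha), b⁻¹ * d, H.mul_mem (H.inv_mem hb) hd, by group⟩

lemma dcoset_inv_eq (g : G) : (dcoset H g)⁻¹ = dcoset H g⁻¹ := by
  ext x
  simp only [Set.mem_inv]
  constructor
  · rintro ⟨a, ha, b, hb, hx⟩
    refine ⟨b⁻¹, H.inv_mem hb, a⁻¹, H.inv_mem ha, ?_⟩
    have : x = (a * g * b)⁻¹ := by rw [← hx]; group
    rw [this]; group
  · rintro ⟨a, ha, b, hb, hx⟩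
    refine ⟨b⁻¹, H.inv_mem hb, a⁻¹, H.inv_mem ha, ?_⟩
    rw [hx]; group

lemma dcoset_of_mem {g : G} (hg : g ∈ H) : dcoset H g = (H : Set G) := by
  ext x
  constructor
  · rintro ⟨a, ha, b, hb, rfl⟩
    exact H.mul_mem (H.mul_mem ha hg) hb
  · intro hx
    exact ⟨x * g⁻¹, H.mul_mem hx (H.inv_mem hg), 1, H.one_mem, by group⟩

lemma not_mem_of_mem_dcoset {g x : G} (hg : g ∉ H) (hx : x ∈ dcoset H g) : x ∉ H := by
  rintro hxH
  obtain ⟨a, ha, b, hb, rfl⟩ := hx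
  exact hg (by
    have : a⁻¹ * (a * g * b) * b⁻¹ ∈ H := H.mul_mem (H.mul_mem (H.inv_mem ha) hxH) (H.inv_mem hb)
    simpa [mul_assoc] using this)

lemma card_dcoset [Finite G]
    (hmal : ∀ g : G, g ∉ H → ∀ x ∈ H, g * x * g⁻¹ ∈ H → x = 1)
    {g : G} (hg : g ∉ H) :
    Nat.card (dcoset H g) = Nat.card H * Nat.card H := by
  rw [← Nat.card_prod]
  symm
  apply Nat.card_eq_of_bijective (fun p : H × H => ⟨p.1 * g * p.2,
    ⟨p.1, p.1.2, p.2, p.2.2, rfl⟩⟩)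
  constructor
  · rintro ⟨⟨a, ha⟩, ⟨b, hb⟩⟩ ⟨⟨a', ha'⟩, ⟨b', hb'⟩⟩ hEq
    have h1 : a * g * b = a' * g * b' := congrArg Subtype.val hEq
    have hb'' : b' = g⁻¹ * a'⁻¹ * (a * g * b) := by rw [h1]; group
    have key : g * (b' * b⁻¹) * g⁻¹ = a'⁻¹ * a := by rw [hb'']; group
    have hbb : b' * b⁻¹ = 1 :=
      hmal g hg (b' * b⁻¹) (H.mul_mem hb' (H.inv_mem hb))
        (key ▸ H.mul_mem (H.inv_mem ha') ha)
    have hb2 : b' = b := mul_inv_eq_one.mp hbb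
    have ha2 : a = a' := by
      subst hb2
      exact mul_right_cancel (mul_right_cancel h1)
    subst hb2; subst ha2; rfl
  · rintro ⟨x, a, ha, b, hb, rfl⟩
    exact ⟨⟨⟨a, ha⟩, ⟨b, hb⟩⟩, rfl⟩

end Lemmas

/-- for a malnormal finite-index subgroup `H ≤ G` with
`rank(G) ≤ [G:H]`, writing `k` for the number of non-self-inverse double cosets
of `H` in `G`, we have `rank(G) ≤ [G:H] - k/2`. -/

theorem stmt19 {G : Type*} [Group G] [Group.FG G] (H : Subgroup G) [H.FiniteIndex]
    (hmal : ∀ g : G, g ∉ H → ∀ x ∈ H, g * x * g⁻¹ ∈ H → x = 1)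
    (hrk : Group.rank G ≤ H.index) :
    Group.rank G ≤ H.index -
      Nat.card {D : Set G // ∃ g : G, D = dcoset H g ∧ dcoset H g ≠ dcoset H g⁻¹} / 2 := by
  classical
  by_cases htop : H = ⊤
  · subst htop
    have hk : Nat.card {D : Set G // ∃ g : G, D = dcoset (⊤ : Subgroup G) g ∧
        dcoset (⊤ : Subgroup G) g ≠ dcoset (⊤ : Subgroup G) g⁻¹} = 0 := by
      have : IsEmpty {D : Set G // ∃ g : G, D = dcoset (⊤ : Subgroup G) g ∧
          dcoset (⊤ : Subgroup G) g ≠ dcoset (⊤ : Subgroup G) g⁻¹} := by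
        constructor
        rintro ⟨D, g, rfl, hne⟩
        exact hne (by
          rw [dcoset_of_mem _ (Subgroup.mem_top g), dcoset_of_mem _ (Subgroup.mem_top g⁻¹)])
      simp [Nat.card_of_isEmpty]
    rw [hk]
    simpa using hrk
  · obtain ⟨g₀, hg₀⟩ : ∃ g : G, g ∉ H := by
      by_contra hcon
      push_neg at hcon
      exact htop ((Subgroup.eq_top_iff' H).mpr hcon)
    -- G is finite
    have hfinG : Finite G := by
      have hcore : H.normalCore = ⊥ := by
        rw [eq_bot_iff]
        intro x hx
        have hxH : x ∈ H := H.normalCore_le hx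
        have := hmal g₀ hg₀ x hxH (hx g₀)
        simpa [Subgroup.mem_bot] using this
      have h1 : H.normalCore.index ≠ 0 := Subgroup.FiniteIndex.index_ne_zero
      rw [hcore, Subgroup.index_bot] at h1
      exact Nat.finite_of_card_ne_zero h1
    have hfty : Fintype G := Fintype.ofFinite G
    set h : ℕ := Nat.card H with hh
    set n : ℕ := H.index with hn
    have hcardG : h * n = Nat.card G := Subgroup.card_mul_index H
    have hpos : 0 < h := Nat.card_pos
    -- the finset of nontrivial double cosets
    have hDfin : {D : Set G | ∃ g, g ∉ H ∧ D = dcoset H g}.Finite := Set.toFinite _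
    set 𝒟 : Finset (Set G) := hDfin.toFinset with h𝒟
    have mem𝒟 : ∀ D : Set G, D ∈ 𝒟 ↔ ∃ g, g ∉ H ∧ D = dcoset H g := by
      intro D; simp [h𝒟, Set.Finite.mem_toFinset]
    set gf : Set G → G := fun D =>
      if hD : ∃ g, g ∉ H ∧ D = dcoset H g then hD.choose else 1 with hgf
    have hgfspec : ∀ D ∈ 𝒟, gf D ∉ H ∧ D = dcoset H (gf D) := by
      intro D hD
      rw [mem𝒟] at hD
      simp only [hgf, dif_pos hD]
      exact hD.choose_spec
    -- disjointness and cover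
    have hdisj : ∀ D ∈ 𝒟, ∀ D' ∈ 𝒟, D ≠ D' → Disjoint D.toFinset D'.toFinset := by
      intro D hD D' hD' hne
      rw [Finset.disjoint_left]
      intro x hx hx'
      rw [Set.mem_toFinset] at hx hx'
      obtain ⟨g, hg, rfl⟩ := (mem𝒟 D).mp hD
      obtain ⟨g', hg', rfl⟩ := (mem𝒟 D').mp hD'
      exact hne ((dcoset_eq_of_mem H hx).symm.trans (dcoset_eq_of_mem H hx'))
    have hcover : 𝒟.biUnion (fun D => D.toFinset) = ((H : Set G)ᶜ).toFinset := by
      ext x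
      simp only [Finset.mem_biUnion, Set.mem_toFinset, Set.mem_compl_iff, SetLike.mem_coe]
      constructor
      · rintro ⟨D, hD, hx⟩
        obtain ⟨g, hg, rfl⟩ := (mem𝒟 D).mp hD
        exact not_mem_of_mem_dcoset H hg hx
      · intro hx
        exact ⟨dcoset H x, (mem𝒟 _).mpr ⟨x, hx, rfl⟩, mem_dcoset_self H x⟩
    set m : ℕ := 𝒟.card with hm
    have hm1 : 1 ≤ m := by
      have : dcoset H g₀ ∈ 𝒟 := (mem𝒟 _).mpr ⟨g₀, hg₀, rfl⟩
      exact Finset.card_pos.mpr ⟨_, this⟩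
    have hDcard : ∀ D ∈ 𝒟, D.toFinset.card = h * h := by
      intro D hD
      obtain ⟨hg, hDeq⟩ := hgfspec D hD
      rw [← Set.ncard_eq_toFinset_card', ← Nat.card_coe_set_eq, hDeq]
      exact card_dcoset H hmal hg
    have hsum2 : (((H : Set G)ᶜ).toFinset).card = m * (h * h) := by
      rw [← hcover, Finset.card_biUnion hdisj, Finset.sum_congr rfl hDcard,
        Finset.sum_const, smul_eq_mul]
    have hHcard : ((H : Set G).toFinset).card = h := by
      rw [← Set.ncard_eq_toFinset_card', ← Nat.card_coe_set_eq]
      rfl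
    have hcompl : m * (h * h) + h = h * n := by
      have e := Set.ncard_add_ncard_compl (H : Set G)
      rw [Set.ncard_eq_toFinset_card', Set.ncard_eq_toFinset_card', hsum2, hHcard,
        ← hcardG] at e
      omega
    have hmn : m * h + 1 = n := by
      have e2 : h * (m * h + 1) = h * n := by
        have : h * (m * h + 1) = m * (h * h) + h := by ring
        rw [this, hcompl]
      exact Nat.eq_of_mul_eq_mul_left hpos e2
    -- self-inverse split
    set NS : Finset (Set G) := 𝒟.filter (fun D => ¬ (D⁻¹ = D)) with hNSdef
    set SelfD : Finset (Set G) := 𝒟.filter (fun D => D⁻¹ = D) with hSelfDdef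
    have hsplit : SelfD.card + NS.card = m :=
      Finset.card_filter_add_card_filter_not _
    have hNSinv : ∀ D ∈ NS, D⁻¹ ∈ NS := by
      intro D hD
      rw [hNSdef, Finset.mem_filter] at hD ⊢
      obtain ⟨hD𝒟, hDne⟩ := hD
      obtain ⟨g, hg, rfl⟩ := (mem𝒟 _).mp hD𝒟
      refine ⟨(mem𝒟 _).mpr ⟨g⁻¹, fun hmem => hg (by simpa using H.inv_mem hmem),
        (dcoset_inv_eq H g)⟩, ?_⟩
      rw [inv_inv]
      exact fun hEq => hDne hEq.symm
    -- identify k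
    have hkset : {D : Set G | ∃ g : G, D = dcoset H g ∧ dcoset H g ≠ dcoset H g⁻¹}
        = (↑NS : Set (Set G)) := by
      ext D
      simp only [Set.mem_setOf_eq, Finset.coe_filter, hNSdef, Set.mem_setOf_eq,
        Finset.mem_coe, Finset.mem_filter]
      constructor
      · rintro ⟨g, rfl, hne⟩
        have hgH : g ∉ H := by
          intro hmem
          exact hne (by rw [dcoset_of_mem _ hmem, dcoset_of_mem _ (H.inv_mem hmem)])
        refine ⟨(mem𝒟 _).mpr ⟨g, hgH, rfl⟩, ?_⟩
        rw [dcoset_inv_eq]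
        exact fun hEq => hne hEq.symm
      · rintro ⟨hD𝒟, hne⟩
        obtain ⟨g, hg, rfl⟩ := (mem𝒟 _).mp hD𝒟
        refine ⟨g, rfl, ?_⟩
        rw [dcoset_inv_eq] at hne
        exact fun hEq => hne hEq.symm
    have hkcard : Nat.card {D : Set G // ∃ g : G, D = dcoset H g ∧
        dcoset H g ≠ dcoset H g⁻¹} = NS.card := by
      have : Nat.card {D : Set G // ∃ g : G, D = dcoset H g ∧ dcoset H g ≠ dcoset H g⁻¹}
          = Nat.card (↑NS : Set (Set G)) := by
        exact Nat.card_congr (Equiv.setCongr hkset)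
      rw [this, Nat.card_coe_set_eq, Set.ncard_coe_finset]
    -- pairing
    set pairFn : Set G → Finset (Set G) := fun D => {D, D⁻¹} with hpairFn
    set P : Finset (Finset (Set G)) := NS.image pairFn with hP
    have hfibcard : ∀ p ∈ P, (NS.filter (fun D => pairFn D = p)).card = 2 := by
      intro p hp
      obtain ⟨D₀, hD₀, rfl⟩ := Finset.mem_image.mp hp
      have hfib : NS.filter (fun D => pairFn D = pairFn D₀) = {D₀, D₀⁻¹} := by
        ext D
        simp only [Finset.mem_filter, Finset.mem_insert, Finset.mem_singleton]
        constructor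
        · rintro ⟨hDNS, hDp⟩
          have : D ∈ pairFn D₀ := by
            rw [← hDp]; simp [hpairFn]
          simpa [hpairFn] using this
        · rintro (rfl | rfl)
          · exact ⟨hD₀, rfl⟩
          · refine ⟨hNSinv D₀ hD₀, ?_⟩
            simp only [hpairFn, inv_inv]
            exact Finset.pair_comm _ _
      have hne : D₀ ≠ D₀⁻¹ := fun hEq => (Finset.mem_filter.mp hD₀).2 hEq.symm
      rw [hfib, Finset.card_pair hne]
    have hNS2 : NS.card = 2 * P.card := by
      rw [Finset.card_eq_sum_card_fiberwise (fun D hD => Finset.mem_image_of_mem pairFn hD),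
        Finset.sum_congr rfl hfibcard, Finset.sum_const, smul_eq_mul, mul_comm]
    -- choice of representative coset per pair
    set pick : Finset (Set G) → Set G := fun p =>
      if hp : p.Nonempty then hp.choose else ∅ with hpick
    have hpickmem : ∀ p ∈ P, pick p ∈ p := by
      intro p hp
      obtain ⟨D₀, _, rfl⟩ := Finset.mem_image.mp hp
      have hne : (pairFn D₀).Nonempty := ⟨D₀, by simp [hpairFn]⟩
      simp only [hpick, dif_pos hne]
      exact hne.choose_spec
    set Keep : Finset (Set G) := SelfD ∪ P.image pick with hKeep
    have hKeep𝒟 : ∀ D ∈ Keep, D ∈ 𝒟 := by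
      intro D hD
      rw [hKeep, Finset.mem_union] at hD
      rcases hD with hD | hD
      · exact (Finset.mem_filter.mp hD).1
      · obtain ⟨p, hp, rfl⟩ := Finset.mem_image.mp hD
        have hm := hpickmem p hp
        obtain ⟨D₀, hD₀, rfl⟩ := Finset.mem_image.mp hp
        have : pick (pairFn D₀) = D₀ ∨ pick (pairFn D₀) = D₀⁻¹ := by
          simpa [hpairFn] using hm
        rcases this with hEq | hEq
        · rw [hEq]; exact (Finset.mem_filter.mp hD₀).1
        · rw [hEq]; exact (Finset.mem_filter.mp (hNSinv D₀ hD₀)).1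
    -- the generating set
    set S : Finset G := (H : Set G).toFinset ∪ Keep.image gf with hS
    have hSgen : Subgroup.closure (↑S : Set G) = ⊤ := by
      rw [eq_top_iff]
      intro x _
      have hHsub : ∀ y : G, y ∈ H → y ∈ Subgroup.closure (↑S : Set G) := by
        intro y hy
        apply Subgroup.subset_closure
        simp only [hS, Finset.coe_union, Set.mem_union, Finset.mem_coe, Set.mem_toFinset]
        exact Or.inl (by simpa using hy)
      have hgen : ∀ D ∈ Keep, ∀ z ∈ D, z ∈ Subgroup.closure (↑S : Set G) := by
        intro D hD z hz
        obtain ⟨hgD, hDeq⟩ := hgfspec D (hKeep𝒟 D hD)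
        rw [hDeq] at hz
        obtain ⟨a, ha, b, hb, rfl⟩ := hz
        have hgf_mem : gf D ∈ Subgroup.closure (↑S : Set G) := by
          apply Subgroup.subset_closure
          simp only [hS, Finset.coe_union, Set.mem_union, Finset.mem_coe]
          exact Or.inr (Finset.mem_image_of_mem gf hD)
        exact Subgroup.mul_mem _ (Subgroup.mul_mem _ (hHsub a ha) hgf_mem) (hHsub b hb)
      by_cases hxH : x ∈ H
      · exact hHsub x hxH
      · have hxD : dcoset H x ∈ 𝒟 := (mem𝒟 _).mpr ⟨x, hxH, rfl⟩
        by_cases hself : (dcoset H x)⁻¹ = dcoset H x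
        · have hmemSelf : dcoset H x ∈ Keep := by
            rw [hKeep, Finset.mem_union]
            exact Or.inl (Finset.mem_filter.mpr ⟨hxD, hself⟩)
          exact hgen _ hmemSelf x (mem_dcoset_self H x)
        · have hxNS : dcoset H x ∈ NS := Finset.mem_filter.mpr ⟨hxD, hself⟩
          set p := pairFn (dcoset H x) with hpdef
          have hpP : p ∈ P := Finset.mem_image_of_mem pairFn hxNS
          have hpKeep : pick p ∈ Keep := by
            rw [hKeep, Finset.mem_union]
            exact Or.inr (Finset.mem_image_of_mem pick hpP)
          have hm := hpickmem p hpP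
          have : pick p = dcoset H x ∨ pick p = (dcoset H x)⁻¹ := by
            simpa [hpdef, hpairFn] using hm
          rcases this with hEq | hEq
          · exact hgen _ hpKeep x (hEq ▸ mem_dcoset_self H x)
          · have hxinv : x⁻¹ ∈ pick p := by
              rw [hEq, Set.mem_inv, inv_inv]
              exact mem_dcoset_self H x
            have := hgen _ hpKeep x⁻¹ hxinv
            simpa using Subgroup.inv_mem _ this
    -- counting
    have hScard : S.card ≤ h + (SelfD.card + P.card) := by
      calc S.card ≤ ((H : Set G).toFinset).card + (Keep.image gf).card :=
            Finset.card_union_le _ _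
        _ ≤ h + Keep.card := by
            rw [hHcard]
            exact Nat.add_le_add_left (Finset.card_image_le) h
        _ ≤ h + (SelfD.card + (P.image pick).card) := by
            rw [hKeep]
            exact Nat.add_le_add_left (Finset.card_union_le _ _) h
        _ ≤ h + (SelfD.card + P.card) := by
            exact Nat.add_le_add_left (Nat.add_le_add_left Finset.card_image_le _) h
    have hrank : Group.rank G ≤ S.card := Group.rank_le hSgen
    -- final arithmetic
    rw [hkcard, hNS2]
    have hmain : h + m ≤ n := by
      rw [← hmn]
      rcases Nat.exists_eq_add_of_le hm1 with ⟨m', hm'⟩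
      rcases Nat.exists_eq_add_of_le hpos with ⟨h', hh'⟩
      rw [hm', hh']
      nlinarith [Nat.zero_le (m' * h')]
    have : Group.rank G + P.card ≤ n := by
      calc Group.rank G + P.card ≤ (h + (SelfD.card + P.card)) + P.card :=
            Nat.add_le_add_right (hrank.trans hScard) _
        _ = h + (SelfD.card + 2 * P.card) := by ring
        _ = h + m := by rw [← hNS2, hsplit]
        _ ≤ n := hmain
    have h2 : 2 * P.card / 2 = P.card := by omega
    rw [h2]
    exact Nat.le_sub_of_add_le this
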